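/- Let s > 1/2. Define λ_n = ⟨n⟩^{-(2s+2-2σ)} and λ̃_n = ⟨n⟩^{2σ}/(1+|n|²+|n|^{2s+2}) for n ∈ ℤ² and a fixed σ < s. Then the series Σ_{n ∈ ℤ²} (λ_n - λ̃_n)²/(λ_n + λ̃_n)² converges. -/

import Mathlib

open Real Set

/-- MVT bound: `(1+r)^p - r^p ≤ p (1+r)^(p-1)` for `r ≥ 0`, `p ≥ 1`. -/
lemma aux_rpow_mvt {r p : ℝ} (hr : 0 ≤ r) (hp : 1 ≤ p) :
    (1 + r) ^ p - r ^ p ≤ p * (1 + r) ^ (p - 1) := by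
  obtain ⟨c, hc, hslope⟩ := exists_hasDerivAt_eq_slope (fun x => x ^ p)
    (fun x => p * x ^ (p - 1)) (by linarith : r < 1 + r)
    (fun x _ => (Real.continuousAt_rpow_const x p (Or.inr (by linarith))).continuousWithinAt)
    (fun x hx => Real.hasDerivAt_rpow_const (Or.inl (lt_of_le_of_lt hr hx.1).ne'))
  have h1 : (1 : ℝ) + r - r = 1 := by ring
  rw [h1, div_one] at hslope
  have hcle : c ^ (p - 1) ≤ (1 + r) ^ (p - 1) :=
    Real.rpow_le_rpow (le_of_lt (lt_of_le_of_lt hr hc.1)) (le_of_lt hc.2) (by linarith)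
  calc (1 + r) ^ p - r ^ p = p * c ^ (p - 1) := hslope.symm
    _ ≤ p * (1 + r) ^ (p - 1) := by
        apply mul_le_mul_of_nonneg_left hcle (by linarith)

lemma aux_sum1 {q : ℝ} (hq : 1 / 2 < q) :
    Summable fun a : ℤ => (1 + (a : ℝ) ^ 2) ^ (-q) := by
  have hq0 : (0 : ℝ) ≤ q := by linarith
  have base : Summable fun a : ℤ => 1 / |(a : ℝ) + 0| ^ (2 * q) :=
    (Real.summable_one_div_int_add_rpow 0 (2 * q)).mpr (by linarith)
  refine Summable.of_norm_bounded_eventually base ?_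
  rw [Filter.eventually_cofinite]
  apply Set.Finite.subset (Set.finite_singleton (0 : ℤ))
  intro a ha
  simp only [Set.mem_setOf_eq] at ha
  by_contra h0
  apply ha
  have haz : (a : ℝ) ≠ 0 := by
    simpa using fun h => h0 (by exact_mod_cast h : a = 0)
  have hpos : (0 : ℝ) < 1 + (a : ℝ) ^ 2 := by positivity
  have h1 : ‖(1 + (a : ℝ) ^ 2) ^ (-q)‖ = (1 + (a : ℝ) ^ 2) ^ (-q) :=
    Real.norm_of_nonneg (Real.rpow_nonneg hpos.le _)
  rw [h1, add_zero]
  have e1 : |(a : ℝ)| ^ (2 * q) = ((a : ℝ) ^ 2) ^ q := by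
    rw [show ((a:ℝ)^2) = |(a:ℝ)| ^ (2:ℕ) by rw [sq_abs],
      ← Real.rpow_natCast |(a:ℝ)| 2, ← Real.rpow_mul (abs_nonneg _)]
    norm_num
  have h2 : ((a : ℝ) ^ 2) ^ q ≤ (1 + (a : ℝ) ^ 2) ^ q :=
    Real.rpow_le_rpow (sq_nonneg _) (by linarith) hq0
  have h3 : (0 : ℝ) < ((a : ℝ) ^ 2) ^ q := Real.rpow_pos_of_pos (by positivity) _
  rw [e1, Real.rpow_neg hpos.le, ← one_div]
  exact one_div_le_one_div_of_le h3 h2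

lemma aux_sum2 {p : ℝ} (hp : 1 < p) :
    Summable fun n : ℤ × ℤ => (1 + (n.1 : ℝ) ^ 2 + (n.2 : ℝ) ^ 2) ^ (-p) := by
  have h1 := aux_sum1 (q := p / 2) (by linarith)
  have h2 := h1.mul_of_nonneg h1 (fun a => Real.rpow_nonneg (by positivity) _)
    (fun a => Real.rpow_nonneg (by positivity) _)
  refine h2.of_nonneg_of_le (fun n => Real.rpow_nonneg (by positivity) _) ?_
  intro n
  set x := ((n.1 : ℤ) : ℝ)
  set y := ((n.2 : ℤ) : ℝ)
  have hA : (0 : ℝ) < 1 + x ^ 2 + y ^ 2 := by positivity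
  have key : (1 + x ^ 2) * (1 + y ^ 2) ≤ (1 + x ^ 2 + y ^ 2) ^ (2:ℕ) := by
    nlinarith [sq_nonneg x, sq_nonneg y, sq_nonneg (x * y)]
  calc (1 + x ^ 2 + y ^ 2) ^ (-p)
      = ((1 + x ^ 2 + y ^ 2) ^ (2 : ℕ)) ^ (-(p / 2)) := by
        rw [← Real.rpow_natCast (1 + x ^ 2 + y ^ 2) 2, ← Real.rpow_mul hA.le]
        congr 1; ring
    _ ≤ ((1 + x ^ 2) * (1 + y ^ 2)) ^ (-(p / 2)) :=
        Real.rpow_le_rpow_of_nonpos (by positivity) key (by linarith)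
    _ = (1 + x ^ 2) ^ (-(p / 2)) * (1 + y ^ 2) ^ (-(p / 2)) :=
        Real.mul_rpow (by positivity) (by positivity)

lemma aux_key {s σ r : ℝ} (hs : 1 / 2 < s) (hr : 0 ≤ r) :
    (((1 + r) ^ (-(2 * s + 2 - 2 * σ) / 2) - (1 + r) ^ σ / (1 + r + r ^ (s + 1))) /
      ((1 + r) ^ (-(2 * s + 2 - 2 * σ) / 2) + (1 + r) ^ σ / (1 + r + r ^ (s + 1)))) ^ 2
    ≤ 2 * (1 + r) ^ (-(2 * s)) + 2 * (s + 1) ^ 2 * (1 + r) ^ (-(2 : ℝ)) := by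
  set a := 1 + r with hadef
  have ha : (0 : ℝ) < a := by rw [hadef]; linarith
  have hrp : (0 : ℝ) ≤ r ^ (s + 1) := Real.rpow_nonneg hr _
  set D := a + r ^ (s + 1) with hDdef
  have hD : (0 : ℝ) < D := by rw [hDdef]; linarith
  set E := a ^ (s + 1) with hEdef
  have hE : (0 : ℝ) < E := Real.rpow_pos_of_pos ha _
  have hexp : a ^ (-(2 * s + 2 - 2 * σ) / 2) = a ^ σ / a ^ (s + 1) := by
    rw [show -(2 * s + 2 - 2 * σ) / 2 = σ - (s + 1) by ring, Real.rpow_sub ha]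
  rw [hexp, ← hEdef]
  have hσp : (0 : ℝ) < a ^ σ := Real.rpow_pos_of_pos ha _
  have hratio : (a ^ σ / E - a ^ σ / D) / (a ^ σ / E + a ^ σ / D) = (D - E) / (D + E) := by
    rw [div_eq_div_iff (by positivity) (by positivity)]
    field_simp
  rw [hratio]
  -- bound |D - E|
  have hmvt : a ^ (s + 1) - r ^ (s + 1) ≤ (s + 1) * a ^ s := by
    have := aux_rpow_mvt hr (by linarith : (1:ℝ) ≤ s + 1)
    rw [show s + 1 - 1 = s by ring] at this
    rw [hadef]; exact this
  have hmono : r ^ (s + 1) ≤ a ^ (s + 1) :=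
    Real.rpow_le_rpow hr (by rw [hadef]; linarith) (by linarith)
  have haspos : (0 : ℝ) < a ^ s := Real.rpow_pos_of_pos ha _
  have habs : |D - E| ≤ a + (s + 1) * a ^ s := by
    rw [abs_le]
    constructor
    · rw [hDdef, hEdef]; nlinarith
    · rw [hDdef, hEdef]; nlinarith
  have hstep4 : |(D - E) / (D + E)| ≤ (a + (s + 1) * a ^ s) / E := by
    rw [abs_div, abs_of_pos (by linarith : (0:ℝ) < D + E)]
    exact div_le_div₀ (by positivity) habs hE (by linarith)
  have e1 : a ^ (-s) * a ^ (s + 1) = a := by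
    rw [← Real.rpow_add ha, show -s + (s + 1) = (1:ℝ) by ring, Real.rpow_one]
  have e2 : a ^ (-(1 : ℝ)) * a ^ (s + 1) = a ^ s := by
    rw [← Real.rpow_add ha, show -(1:ℝ) + (s + 1) = s by ring]
  have h5 : (a + (s + 1) * a ^ s) / E = a ^ (-s) + (s + 1) * a ^ (-(1 : ℝ)) := by
    rw [hEdef, div_eq_iff (by positivity : (a : ℝ) ^ (s+1) ≠ 0)]
    linear_combination -e1 - (s + 1) * e2
  rw [h5] at hstep4
  have e3 : a ^ (-s) * a ^ (-s) = a ^ (-(2 * s)) := by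
    rw [← Real.rpow_add ha, show -s + -s = -(2 * s) by ring]
  have e4 : a ^ (-(1:ℝ)) * a ^ (-(1:ℝ)) = a ^ (-(2 : ℝ)) := by
    rw [← Real.rpow_add ha, show -(1:ℝ) + -(1:ℝ) = -(2:ℝ) by ring]
  have hu : (0:ℝ) ≤ a ^ (-s) := Real.rpow_nonneg ha.le _
  have hv : (0:ℝ) ≤ a ^ (-(1:ℝ)) := Real.rpow_nonneg ha.le _
  have hq2 : ((D - E) / (D + E)) ^ 2 = |(D - E) / (D + E)| ^ 2 := (sq_abs _).symm
  rw [hq2]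
  nlinarith [sq_nonneg (a ^ (-s) - (s + 1) * a ^ (-(1:ℝ))), abs_nonneg ((D - E) / (D + E)),
    hstep4, e3, e4]

/-- Kakutani summability criterion for the equivalence of `μ_s` and `μ̃_s`.
Here `⟨n⟩² = 1 + |n|²`, `λ_n = ⟨n⟩^{-(2s+2-2σ)}` and
`λ̃_n = ⟨n⟩^{2σ}/(1+|n|²+|n|^{2s+2})`. For `s > 1/2` and `σ < s`,
`∑_{n ∈ ℤ²} (λ_n - λ̃_n)²/(λ_n + λ̃_n)² < ∞`. -/
theorem stmt1 (s σ : ℝ) (hs : 1 / 2 < s) (hσ : σ < s) :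
    Summable (fun n : ℤ × ℤ =>
      (((1 + (n.1 : ℝ) ^ 2 + (n.2 : ℝ) ^ 2) ^ (-(2 * s + 2 - 2 * σ) / 2) -
          (1 + (n.1 : ℝ) ^ 2 + (n.2 : ℝ) ^ 2) ^ (σ) /
            (1 + ((n.1 : ℝ) ^ 2 + (n.2 : ℝ) ^ 2) +
              ((n.1 : ℝ) ^ 2 + (n.2 : ℝ) ^ 2) ^ (s + 1))) /
        ((1 + (n.1 : ℝ) ^ 2 + (n.2 : ℝ) ^ 2) ^ (-(2 * s + 2 - 2 * σ) / 2) +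
          (1 + (n.1 : ℝ) ^ 2 + (n.2 : ℝ) ^ 2) ^ (σ) /
            (1 + ((n.1 : ℝ) ^ 2 + (n.2 : ℝ) ^ 2) +
              ((n.1 : ℝ) ^ 2 + (n.2 : ℝ) ^ 2) ^ (s + 1)))) ^ 2) := by
  have hb1 : Summable fun n : ℤ × ℤ =>
      (1 + (n.1 : ℝ) ^ 2 + (n.2 : ℝ) ^ 2) ^ (-(2 * s)) := aux_sum2 (by linarith)
  have hb2 : Summable fun n : ℤ × ℤ =>
      (1 + (n.1 : ℝ) ^ 2 + (n.2 : ℝ) ^ 2) ^ (-(2 : ℝ)) := aux_sum2 one_lt_two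
  have hg : Summable fun n : ℤ × ℤ =>
      2 * (1 + (n.1 : ℝ) ^ 2 + (n.2 : ℝ) ^ 2) ^ (-(2 * s)) +
        2 * (s + 1) ^ 2 * (1 + (n.1 : ℝ) ^ 2 + (n.2 : ℝ) ^ 2) ^ (-(2 : ℝ)) :=
    (hb1.mul_left 2).add (hb2.mul_left _)
  refine hg.of_nonneg_of_le (fun n => sq_nonneg _) ?_
  intro n
  have e : (1 : ℝ) + (n.1 : ℝ) ^ 2 + (n.2 : ℝ) ^ 2
      = 1 + ((n.1 : ℝ) ^ 2 + (n.2 : ℝ) ^ 2) := by ring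
  rw [e]
  exact aux_key hs (by positivity)
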